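/- A subset S of a real projective space P(V) is a saturated multi-convex set if and only if S is a proper subset of P(V) and Φ*(Φ(S)) = S, where Φ(S) is the set of hyperplanes avoiding S viewed as points of P(V*) and Φ* is the dual map. Consequently, Φ restricts to an order-reversing bijection (anti-isomorphism) between nonempty saturated multi-convex sets of P(V) and those of P(V*), with inverse Φ*. -/

import Mathlib

open scoped LinearAlgebra.Projectivization
open Projectivization

/-- The "positive" projective segment joining the points represented by `u` and `v`:
`{π(a•u + b•v) : a*b ≥ 0, (a,b) ≠ (0,0)}`. -/
def projSeg {W : Type*} [AddCommGroup W] [Module ℝ W] (u v : W) : Set (ℙ ℝ W) :=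
  {x | ∃ (a b : ℝ) (h : a • u + b • v ≠ 0),
    0 ≤ a * b ∧ x = Projectivization.mk ℝ (a • u + b • v) h}

/-- The "negative" projective segment joining the points represented by `u` and `v`:
`{π(a•u + b•v) : a*b ≤ 0, (a,b) ≠ (0,0)}`. -/
def projSegN {W : Type*} [AddCommGroup W] [Module ℝ W] (u v : W) : Set (ℙ ℝ W) :=
  {x | ∃ (a b : ℝ) (h : a • u + b • v ≠ 0),
    a * b ≤ 0 ∧ x = Projectivization.mk ℝ (a • u + b • v) h}

/-- A set in a real projective space is projective convex if for any two distinct points of it,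
exactly one of the two projective segments joining them is contained in it. -/
def IsProjConvex {W : Type*} [AddCommGroup W] [Module ℝ W] (S : Set (ℙ ℝ W)) : Prop :=
  ∀ p ∈ S, ∀ q ∈ S, p ≠ q →
    Xor' (projSeg p.rep q.rep ⊆ S) (projSegN p.rep q.rep ⊆ S)

/-- The quotient topology on a real projective space. -/
noncomputable instance projTopInst {W : Type*} [NormedAddCommGroup W] [NormedSpace ℝ W] :
    TopologicalSpace (ℙ ℝ W) :=
  instTopologicalSpaceQuotient

noncomputable instance dualNACG {W : Type*} [NormedAddCommGroup W] [NormedSpace ℝ W]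
    [FiniteDimensional ℝ W] : NormedAddCommGroup (Module.Dual ℝ W) :=
  NormedAddCommGroup.induced _ _
    (LinearMap.toContinuousLinearMap : Module.Dual ℝ W ≃ₗ[ℝ] (W →L[ℝ] ℝ))
    (LinearEquiv.injective _)

noncomputable instance dualNS {W : Type*} [NormedAddCommGroup W] [NormedSpace ℝ W]
    [FiniteDimensional ℝ W] : NormedSpace ℝ (Module.Dual ℝ W) :=
  NormedSpace.induced ℝ _ _
    (LinearMap.toContinuousLinearMap : Module.Dual ℝ W ≃ₗ[ℝ] (W →L[ℝ] ℝ))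

/-- A saturated multi-convex set: an intersection of a nonempty family of open projective
convex sets. -/
def IsSatMultiConvex {W : Type*} [NormedAddCommGroup W] [NormedSpace ℝ W]
    (C : Set (ℙ ℝ W)) : Prop :=
  ∃ F : Set (Set (ℙ ℝ W)), F.Nonempty ∧ (∀ S ∈ F, IsOpen S ∧ IsProjConvex S) ∧ C = ⋂₀ F

/-- `Φ(S)`: the hyperplanes disjoint from `S`, viewed as points of the dual projective space. -/
def PhiMap {W : Type*} [AddCommGroup W] [Module ℝ W] (S : Set (ℙ ℝ W)) :
    Set (ℙ ℝ (Module.Dual ℝ W)) :=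
  {ψ | ∀ x ∈ S, ψ.rep x.rep ≠ 0}

/-- `Φ*`: the dual map, via the canonical pairing (identifying `V** ≅ V`). -/
def PhiStar {W : Type*} [AddCommGroup W] [Module ℝ W] (T : Set (ℙ ℝ (Module.Dual ℝ W))) :
    Set (ℙ ℝ W) :=
  {x | ∀ ψ ∈ T, ψ.rep x.rep ≠ 0}
namespace SatMC

open Projectivization Module Set

section Alg
variable {W : Type*} [AddCommGroup W] [Module ℝ W]

lemma mk_eq_of_eq {z z' : W} (hz : z ≠ 0) (h : z = z') :
    Projectivization.mk ℝ z hz = Projectivization.mk ℝ z' (h ▸ hz) := by subst h; rfl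

lemma mk_smul_eq {z : W} (hz : z ≠ 0) {c : ℝ} (hc : c ≠ 0) :
    Projectivization.mk ℝ (c • z) (by simp [hc, hz, smul_eq_zero]) =
      Projectivization.mk ℝ z hz := by
  rw [mk_eq_mk_iff']
  exact ⟨c, rfl⟩

lemma mem_projSeg {u v : W} {x : ℙ ℝ W} :
    x ∈ projSeg u v ↔ ∃ (a b : ℝ) (h : a • u + b • v ≠ 0),
      0 ≤ a * b ∧ x = Projectivization.mk ℝ (a • u + b • v) h := Iff.rfl

lemma projSegN_eq_projSeg_neg (u v : W) : projSegN u v = projSeg u (-v) := by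
  ext x
  constructor
  · rintro ⟨a, b, h, hab, rfl⟩
    have hv : a • u + (-b) • (-v) = a • u + b • v := by module
    refine ⟨a, -b, by rw [hv]; exact h, by nlinarith, ?_⟩
    rw [mk_eq_of_eq _ hv.symm]
  · rintro ⟨a, b, h, hab, rfl⟩
    have hv : a • u + (-b) • v = a • u + b • (-v) := by module
    refine ⟨a, -b, by rw [hv]; exact h, by nlinarith, ?_⟩
    rw [mk_eq_of_eq _ hv.symm]

lemma projSeg_smul_right_pos (u v : W) {c : ℝ} (hc : 0 < c) :
    projSeg u (c • v) = projSeg u v := by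
  ext x
  constructor
  · rintro ⟨a, b, h, hab, rfl⟩
    have hv : a • u + (b * c) • v = a • u + b • (c • v) := by
      rw [mul_smul]
    refine ⟨a, b * c, by rw [hv]; exact h, by nlinarith, ?_⟩
    rw [mk_eq_of_eq _ hv.symm]
  · rintro ⟨a, b, h, hab, rfl⟩
    have hv : a • u + (b / c) • (c • v) = a • u + b • v := by
      rw [smul_smul, div_mul_cancel₀ _ hc.ne']
    refine ⟨a, b / c, by rw [hv]; exact h, ?_, ?_⟩
    · rw [show a * (b/c) = a*b/c by ring]
      exact div_nonneg hab hc.le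
    · rw [mk_eq_of_eq _ hv.symm]

lemma projSeg_smul_left_pos (u v : W) {c : ℝ} (hc : 0 < c) :
    projSeg (c • u) v = projSeg u v := by
  ext x
  constructor
  · rintro ⟨a, b, h, hab, rfl⟩
    have hv : (a * c) • u + b • v = a • (c • u) + b • v := by
      rw [mul_smul]
    refine ⟨a * c, b, by rw [hv]; exact h, by nlinarith, ?_⟩
    rw [mk_eq_of_eq _ hv.symm]
  · rintro ⟨a, b, h, hab, rfl⟩
    have hv : (a / c) • (c • u) + b • v = a • u + b • v := by
      rw [smul_smul, div_mul_cancel₀ _ hc.ne']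
    refine ⟨a / c, b, by rw [hv]; exact h, ?_, ?_⟩
    · rw [show a/c*b = a*b/c by ring]
      exact div_nonneg hab hc.le
    · rw [mk_eq_of_eq _ hv.symm]

lemma projSeg_neg_neg (u v : W) : projSeg (-u) (-v) = projSeg u v := by
  ext x
  constructor
  · rintro ⟨a, b, h, hab, rfl⟩
    have hv : (-a) • u + (-b) • v = a • (-u) + b • (-v) := by module
    refine ⟨-a, -b, by rw [hv]; exact h, by nlinarith, ?_⟩
    rw [mk_eq_of_eq _ hv.symm]
  · rintro ⟨a, b, h, hab, rfl⟩
    have hv : (-a) • (-u) + (-b) • (-v) = a • u + b • v := by module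
    refine ⟨-a, -b, by rw [hv]; exact h, by nlinarith, ?_⟩
    rw [mk_eq_of_eq _ hv.symm]

lemma projSeg_neg_right (u v : W) : projSeg u (-v) = projSegN u v :=
  (projSegN_eq_projSeg_neg u v).symm

lemma projSeg_neg_left (u v : W) : projSeg (-u) v = projSegN u v :=
  calc projSeg (-u) v = projSeg (-u) (-(-v)) := by rw [neg_neg]
    _ = projSeg u (-v) := projSeg_neg_neg u (-v)
    _ = projSegN u v := projSeg_neg_right u v

lemma projSeg_smul_right_neg (u v : W) {c : ℝ} (hc : c < 0) :
    projSeg u (c • v) = projSegN u v := by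
  have : c • v = (-c) • (-v) := by module
  rw [this, projSeg_smul_right_pos u (-v) (by linarith), projSeg_neg_right]

lemma projSeg_smul_left_neg (u v : W) {c : ℝ} (hc : c < 0) :
    projSeg (c • u) v = projSegN u v := by
  have : c • u = (-c) • (-u) := by module
  rw [this, projSeg_smul_left_pos (-u) v (by linarith), projSeg_neg_left]

lemma projSegN_smul_right_pos (u v : W) {c : ℝ} (hc : 0 < c) :
    projSegN u (c • v) = projSegN u v := by
  rw [← projSeg_neg_right, ← projSeg_neg_right, ← smul_neg,
    projSeg_smul_right_pos u (-v) hc]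

lemma projSegN_smul_right_neg (u v : W) {c : ℝ} (hc : c < 0) :
    projSegN u (c • v) = projSeg u v := by
  rw [← projSeg_neg_right, ← smul_neg, projSeg_smul_right_neg u (-v) hc,
    ← projSeg_neg_right, neg_neg]

lemma projSegN_smul_left_pos (u v : W) {c : ℝ} (hc : 0 < c) :
    projSegN (c • u) v = projSegN u v := by
  rw [← projSeg_neg_left, ← projSeg_neg_left, ← smul_neg,
    projSeg_smul_left_pos (-u) v hc]

lemma projSegN_smul_left_neg (u v : W) {c : ℝ} (hc : c < 0) :
    projSegN (c • u) v = projSeg u v := by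
  rw [← projSeg_neg_left, ← smul_neg, projSeg_smul_left_neg (-u) v hc,
    ← projSeg_neg_left, neg_neg]

end Alg
end SatMC
namespace SatMC

section Lift
variable {W : Type*} [NormedAddCommGroup W] [NormedSpace ℝ W]

/-- The set of nonzero lifts of points of `C`. -/
def lift (C : Set (ℙ ℝ W)) : Set W :=
  {v | ∃ h : v ≠ 0, Projectivization.mk ℝ v h ∈ C}

lemma lift_nonzero {C : Set (ℙ ℝ W)} {v : W} (h : v ∈ lift C) : v ≠ 0 := h.1

lemma mem_lift {C : Set (ℙ ℝ W)} {v : W} (hv : v ≠ 0) :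
    v ∈ lift C ↔ Projectivization.mk ℝ v hv ∈ C := ⟨fun ⟨_, h⟩ => h, fun h => ⟨hv, h⟩⟩

lemma smul_mem_lift {C : Set (ℙ ℝ W)} {v : W} {c : ℝ} (hc : c ≠ 0) (h : v ∈ lift C) :
    c • v ∈ lift C := by
  have hv := lift_nonzero h
  have hcv : c • v ≠ 0 := by simp [smul_eq_zero, hc, hv]
  rw [mem_lift hcv, mk_smul_eq hv hc]
  exact (mem_lift hv).1 h

lemma rep_mem_lift {C : Set (ℙ ℝ W)} {x : ℙ ℝ W} (h : x ∈ C) : x.rep ∈ lift C :=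
  ⟨x.rep_nonzero, by rwa [Projectivization.mk_rep]⟩

lemma isOpen_lift {C : Set (ℙ ℝ W)} (hC : IsOpen C) : IsOpen (lift C) := by
  have h1 : IsOpen ((Projectivization.mk' ℝ (V := W)) ⁻¹' C) :=
    continuous_quotient_mk'.isOpen_preimage C hC
  have h2 : lift C = Subtype.val '' ((Projectivization.mk' ℝ (V := W)) ⁻¹' C) := by
    ext v
    constructor
    · rintro ⟨h, hm⟩
      exact ⟨⟨v, h⟩, hm, rfl⟩
    · rintro ⟨⟨w, hw⟩, hm, rfl⟩
      exact ⟨hw, hm⟩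
  rw [h2]
  exact (isOpen_compl_singleton (x := (0:W))).isOpenMap_subtype_val _ h1

/-- The straight segment from `u` to `v` consists of lifts of points of `C`. -/
def SegIn (C : Set (ℙ ℝ W)) (u v : W) : Prop :=
  ∀ s ∈ Set.Icc (0:ℝ) 1, ((1-s) • u + s • v) ∈ lift C

lemma SegIn.mem_left {C : Set (ℙ ℝ W)} {u v : W} (h : SegIn C u v) : u ∈ lift C := by
  have := h 0 ⟨le_refl 0, zero_le_one⟩
  simpa using this

lemma SegIn.mem_right {C : Set (ℙ ℝ W)} {u v : W} (h : SegIn C u v) : v ∈ lift C := by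
  have := h 1 ⟨zero_le_one, le_refl 1⟩
  simpa using this

lemma segIn_self {C : Set (ℙ ℝ W)} {u : W} (hu : u ∈ lift C) : SegIn C u u := by
  intro s hs
  have e : (1-s) • u + s • u = u := by module
  rwa [e]

/-- Any nonnegative combination of `u` and `w` with positive total weight lies in the lifted
cone, provided the straight segment from `u` to `w` does. -/
lemma cone_point {C : Set (ℙ ℝ W)} {u w : W} (h : SegIn C u w) {a b : ℝ}
    (ha : 0 ≤ a) (hb : 0 ≤ b) (hab : 0 < a + b) : a • u + b • w ∈ lift C := by
  set s := b / (a + b) with hs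
  have hs0 : 0 ≤ s := div_nonneg hb hab.le
  have hs1 : s ≤ 1 := by
    rw [hs, div_le_one hab]; linarith
  have e : a • u + b • w = (a + b) • ((1-s) • u + s • w) := by
    have e1 : (a+b) * (1 - s) = a := by rw [hs]; field_simp; ring
    have e2 : (a+b) * s = b := by rw [hs]; field_simp
    calc a • u + b • w = ((a+b) * (1-s)) • u + ((a+b) * s) • w := by rw [e1, e2]
      _ = (a + b) • ((1-s) • u + s • w) := by module
  rw [e]
  exact smul_mem_lift hab.ne' (h s ⟨hs0, hs1⟩)

lemma SegIn.pos_of_smul_self {C : Set (ℙ ℝ W)} {u : W} {c : ℝ}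
    (h : SegIn C u (c • u)) : 0 < c := by
  by_contra hc
  push_neg at hc
  have h1c : (1:ℝ) ≤ 1 - c := by linarith
  set s := 1 / (1 - c) with hsdef
  have hs0 : 0 < s := by positivity
  have hs1 : s ≤ 1 := by
    rw [hsdef, div_le_one (by linarith)]; exact h1c
  have := h s ⟨hs0.le, hs1⟩
  have e : (1-s) • u + s • (c • u) = (1 - s * (1 - c)) • u := by module
  have e2 : s * (1 - c) = 1 := by
    rw [hsdef]; field_simp
  rw [e, e2] at this
  simp only [sub_self, zero_smul] at this
  exact lift_nonzero this rfl

lemma SegIn.combo {C : Set (ℙ ℝ W)} {u w : W} (h : SegIn C u w) {a b : ℝ}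
    (ha : 0 ≤ a) (hb : 0 ≤ b) (hz : a • u + b • w ≠ 0) : SegIn C u (a • u + b • w) := by
  have hab : 0 < a + b := by
    rcases (add_nonneg ha hb).lt_or_eq with h' | h'
    · exact h'
    · exfalso
      have ha0 : a = 0 := by linarith
      have hb0 : b = 0 := by linarith
      apply hz; rw [ha0, hb0]; module
  intro s hs
  have e : (1-s) • u + s • (a • u + b • w) = (1 - s + s*a) • u + (s*b) • w := by module
  rw [e]
  apply cone_point h (by nlinarith [hs.1, hs.2]) (by nlinarith [hs.1, hs.2])
  have h1 : 1 - s + s*a + s*b = (1 - s) + s*(a+b) := by ring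
  rw [h1]
  rcases hs.1.lt_or_eq with h' | h'
  · have : 0 < s * (a+b) := by positivity
    nlinarith [hs.2]
  · rw [← h']; norm_num

lemma SegIn.smul_right {C : Set (ℙ ℝ W)} {u v : W} (h : SegIn C u v) {c : ℝ} (hc : 0 < c) :
    SegIn C u (c • v) := by
  have hv : v ≠ 0 := lift_nonzero h.mem_right
  have e : (0:ℝ) • u + c • v = c • v := by module
  have hcv : (0:ℝ) • u + c • v ≠ 0 := by
    rw [e]; simp [smul_eq_zero, hc.ne', hv]
  have h' := h.combo (le_refl 0) hc.le hcv
  rwa [e] at h'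

lemma isOpen_segIn {C : Set (ℙ ℝ W)} (hC : IsOpen C) (u : W) {α : Type*} [TopologicalSpace α]
    {z : α → W} (hz : Continuous z) : IsOpen {t | SegIn C u (z t)} := by
  have hU := isOpen_lift hC
  have hG : IsOpen {p : ℝ × α | (1 - p.1) • u + p.1 • z p.2 ∈ lift C} := by
    apply hU.preimage
    exact ((continuous_const.sub continuous_fst).smul continuous_const).add
      (continuous_fst.smul (hz.comp continuous_snd))
  rw [isOpen_iff_mem_nhds]
  intro t ht
  obtain ⟨u1, v1, _, hv1, hIcc, htv, hsub⟩ :=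
    generalized_tube_lemma isCompact_Icc isCompact_singleton hG
      (by rintro ⟨s, t'⟩ ⟨hs, rfl : t' = t⟩; exact ht s hs)
  refine Filter.mem_of_superset (hv1.mem_nhds (htv rfl)) (fun t' ht' s hs => ?_)
  have hm : (s, t') ∈ u1 ×ˢ v1 := Set.mem_prod.mpr ⟨hIcc hs, ht'⟩
  exact hsub hm

end Lift
end SatMC
namespace SatMC

section Conv
open Set
variable {W : Type*} [NormedAddCommGroup W] [NormedSpace ℝ W]

lemma projSeg_subset_of_segIn {C : Set (ℙ ℝ W)} {u v : W} (h : SegIn C u v) :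
    projSeg u v ⊆ C := by
  rintro x ⟨a, b, hz, hab, rfl⟩
  rcases mul_nonneg_iff.1 hab with ⟨ha, hb⟩ | ⟨ha, hb⟩
  · have hab' : 0 < a + b := by
      rcases (add_nonneg ha hb).lt_or_eq with h' | h'
      · exact h'
      · exfalso; apply hz
        have ha0 : a = 0 := by linarith
        have hb0 : b = 0 := by linarith
        rw [ha0, hb0]; module
    exact (mem_lift hz).1 (cone_point h ha hb hab')
  · have hz' : (-a) • u + (-b) • v ≠ 0 := by
      intro h0; apply hz
      have e : a • u + b • v = -((-a) • u + (-b) • v) := by module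
      rw [e, h0, neg_zero]
    have hab' : 0 < -a + -b := by
      rcases (add_nonneg (neg_nonneg.2 ha) (neg_nonneg.2 hb)).lt_or_eq with h' | h'
      · exact h'
      · exfalso; apply hz'
        have ha0 : -a = 0 := by linarith
        have hb0 : -b = 0 := by linarith
        rw [ha0, hb0]; module
    have hmk : Projectivization.mk ℝ (a • u + b • v) hz =
        Projectivization.mk ℝ ((-a) • u + (-b) • v) hz' := by
      rw [Projectivization.mk_eq_mk_iff']
      exact ⟨-1, by module⟩
    rw [hmk]
    exact (mem_lift hz').1 (cone_point h (neg_nonneg.2 ha) (neg_nonneg.2 hb) hab')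

lemma segIn_of_projSeg_subset {C : Set (ℙ ℝ W)} {u v : W} (hu : u ≠ 0)
    (hind : ∀ c : ℝ, v ≠ c • u) (h : projSeg u v ⊆ C) : SegIn C u v := by
  intro s hs
  have hz : (1-s) • u + s • v ≠ 0 := by
    intro h0
    rcases eq_or_ne s 0 with rfl | hs0
    · apply hu; simpa using h0
    · apply hind ((s-1)/s)
      have h1 : s • v = (s-1) • u := by
        calc s • v = ((1-s) • u + s • v) - (1-s) • u := by module
          _ = 0 - (1-s) • u := by rw [h0]
          _ = (s-1) • u := by module
      calc v = s⁻¹ • (s • v) := by rw [smul_smul, inv_mul_cancel₀ hs0, one_smul]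
        _ = s⁻¹ • ((s-1) • u) := by rw [h1]
        _ = ((s-1)/s) • u := by rw [smul_smul, div_eq_inv_mul]
  exact ⟨hz, h ⟨1-s, s, hz, by nlinarith [hs.1, hs.2], rfl⟩⟩

lemma xor_projSeg {C : Set (ℙ ℝ W)} (hconv : IsProjConvex C) {v w : W}
    (hv : v ∈ lift C) (hw : w ∈ lift C) (hind : ∀ c : ℝ, w ≠ c • v) :
    Xor' (projSeg v w ⊆ C) (projSeg v (-w) ⊆ C) := by
  obtain ⟨hv0, hvC⟩ := hv
  obtain ⟨hw0, hwC⟩ := hw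
  have hpq : Projectivization.mk ℝ v hv0 ≠ Projectivization.mk ℝ w hw0 := by
    intro h
    rw [Projectivization.mk_eq_mk_iff'] at h
    obtain ⟨c, hc⟩ := h
    have hc0 : c ≠ 0 := by rintro rfl; rw [zero_smul] at hc; exact hv0 hc.symm
    exact hind c⁻¹ (by rw [← hc, smul_smul, inv_mul_cancel₀ hc0, one_smul])
  have hX := hconv _ hvC _ hwC hpq
  obtain ⟨a, ha⟩ := Projectivization.exists_smul_eq_mk_rep ℝ v hv0
  obtain ⟨b, hb⟩ := Projectivization.exists_smul_eq_mk_rep ℝ w hw0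
  rw [← ha, ← hb, Units.smul_def, Units.smul_def] at hX
  have ha0 : (a:ℝ) ≠ 0 := a.ne_zero
  have hb0 : (b:ℝ) ≠ 0 := b.ne_zero
  rcases ha0.lt_or_gt with ha' | ha' <;> rcases hb0.lt_or_gt with hb' | hb'
  · rwa [projSeg_smul_left_neg _ _ ha', projSegN_smul_right_neg _ _ hb',
      projSegN_smul_left_neg _ _ ha', projSeg_smul_right_neg _ _ hb',
      projSegN_eq_projSeg_neg] at hX
  · rw [projSeg_smul_left_neg _ _ ha', projSegN_smul_right_pos _ _ hb',
      projSegN_smul_left_neg _ _ ha', projSeg_smul_right_pos _ _ hb',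
      projSegN_eq_projSeg_neg] at hX
    exact Eq.mp (_root_.xor_comm _ _) hX
  · rw [projSeg_smul_left_pos _ _ ha', projSeg_smul_right_neg _ _ hb',
      projSegN_smul_left_pos _ _ ha', projSegN_smul_right_neg _ _ hb',
      projSegN_eq_projSeg_neg] at hX
    exact Eq.mp (_root_.xor_comm _ _) hX
  · rwa [projSeg_smul_left_pos _ _ ha', projSeg_smul_right_pos _ _ hb',
      projSegN_smul_left_pos _ _ ha', projSegN_smul_right_pos _ _ hb',
      projSegN_eq_projSeg_neg] at hX

lemma xor_segIn {C : Set (ℙ ℝ W)} (hconv : IsProjConvex C) {u z : W}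
    (hu : u ∈ lift C) (hz : z ∈ lift C) (hind : ∀ c : ℝ, z ≠ c • u) :
    Xor' (SegIn C u z) (SegIn C u (-z)) := by
  have hu0 : u ≠ 0 := lift_nonzero hu
  have h := xor_projSeg hconv hu hz hind
  have hind' : ∀ c : ℝ, -z ≠ c • u := by
    intro c hc
    exact hind (-c) (by rw [neg_smul, ← hc, neg_neg])
  have e1 : (projSeg u z ⊆ C) ↔ SegIn C u z :=
    ⟨segIn_of_projSeg_subset hu0 hind, projSeg_subset_of_segIn⟩
  have e2 : (projSeg u (-z) ⊆ C) ↔ SegIn C u (-z) :=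
    ⟨segIn_of_projSeg_subset hu0 hind', projSeg_subset_of_segIn⟩
  rwa [e1, e2] at h

lemma SegIn.congr {C : Set (ℙ ℝ W)} {u v v' : W} (h : SegIn C u v) (e : v = v') :
    SegIn C u v' := e ▸ h

lemma segIn_of_path {C : Set (ℙ ℝ W)} (hCo : IsOpen C) (hconv : IsProjConvex C)
    {u v w : W} (hu : u ∈ lift C)
    (hpath : ∀ t ∈ Set.Icc (0:ℝ) 1, ((1-t) • v + t • w) ∈ lift C ∧
      (∀ c : ℝ, ((1-t) • v + t • w) ≠ c • u))
    (h0 : SegIn C u v) : SegIn C u w := by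
  set z : ℝ → W := fun t => (1-t) • v + t • w with hzdef
  have hcont : Continuous z := by
    apply Continuous.add
    · exact (continuous_const.sub continuous_id).smul continuous_const
    · exact continuous_id.smul continuous_const
  have hA : IsOpen {t | SegIn C u (z t)} := isOpen_segIn hCo u hcont
  have hB : IsOpen {t | SegIn C u (-(z t))} := isOpen_segIn hCo u hcont.neg
  by_contra hw
  have hsub : Icc (0:ℝ) 1 ⊆ {t | SegIn C u (z t)} ∪ {t | SegIn C u (-(z t))} := by
    intro t ht
    exact Xor'.or (xor_segIn hconv hu (hpath t ht).1 (hpath t ht).2)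
  have h0' : (Icc (0:ℝ) 1 ∩ {t | SegIn C u (z t)}).Nonempty :=
    ⟨0, ⟨le_refl 0, zero_le_one⟩,
      show SegIn C u ((1-(0:ℝ)) • v + (0:ℝ) • w) from h0.congr (by module)⟩
  have h1' : (Icc (0:ℝ) 1 ∩ {t | SegIn C u (-(z t))}).Nonempty := by
    refine ⟨1, ⟨zero_le_one, le_refl 1⟩, ?_⟩
    have hor := Xor'.or (xor_segIn hconv hu (hpath 1 ⟨zero_le_one, le_refl 1⟩).1
      (hpath 1 ⟨zero_le_one, le_refl 1⟩).2)
    rcases hor with h | h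
    · exact absurd (h.congr (by module)) hw
    · exact h
  obtain ⟨t, htI, htA, htB⟩ := isPreconnected_Icc _ _ hA hB hsub h0' h1'
  have := xor_segIn hconv hu (hpath t htI).1 (hpath t htI).2
  rcases this with ⟨_, h⟩ | ⟨_, h⟩
  · exact h htB
  · exact h htA

end Conv
end SatMC
namespace SatMC

section Convexity
open Set
variable {W : Type*} [NormedAddCommGroup W] [NormedSpace ℝ W]

lemma convex_segIn {C : Set (ℙ ℝ W)} (hCo : IsOpen C) (hconv : IsProjConvex C) {u : W}
    (hu : u ∈ lift C) : Convex ℝ {v | SegIn C u v} := by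
  intro v hv w hw a b ha hb hab
  simp only [mem_setOf_eq] at hv hw ⊢
  rcases ha.lt_or_eq with ha' | ha'
  swap
  · have hb1 : b = 1 := by linarith
    exact hw.congr (by rw [← ha', hb1]; module)
  rcases hb.lt_or_eq with hb' | hb'
  swap
  · have ha1 : a = 1 := by linarith
    exact hv.congr (by rw [← hb', ha1]; module)
  have hv0 : v ≠ 0 := lift_nonzero hv.mem_right
  have hw0 : w ≠ 0 := lift_nonzero hw.mem_right
  by_cases hcol : ∃ c : ℝ, w = c • v
  · obtain ⟨c, rfl⟩ := hcol
    have hc : 0 < c := by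
      by_cases hvc : ∃ d : ℝ, v = d • u
      · obtain ⟨d, hd⟩ := hvc
        have hd0 : 0 < d := SegIn.pos_of_smul_self (hv.congr hd)
        have hcd : 0 < c * d :=
          SegIn.pos_of_smul_self (hw.congr (by rw [hd, smul_smul]))
        nlinarith
      · push_neg at hvc
        by_contra hcn
        push_neg at hcn
        have hc0 : c ≠ 0 := by
          rintro rfl; rw [zero_smul] at hw0; exact hw0 rfl
        have hclt : c < 0 := hcn.lt_of_ne hc0
        have hinv : (0:ℝ) < -c⁻¹ := by
          have : c⁻¹ < 0 := inv_lt_zero.2 hclt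
          linarith
        have hnegv : SegIn C u (-v) := by
          refine (hw.smul_right hinv).congr ?_
          rw [smul_smul, show -c⁻¹ * c = -1 by rw [neg_mul, inv_mul_cancel₀ hc0]]
          module
        rcases xor_segIn hconv hu hv.mem_right hvc with ⟨_, h⟩ | ⟨_, h⟩
        · exact h hnegv
        · exact h hv
    exact (hv.smul_right (by positivity : (0:ℝ) < a + b*c)).congr (by module)
  · push_neg at hcol
    have hind : ∀ s t : ℝ, s • v + t • w = 0 → s = 0 ∧ t = 0 := by
      intro s t h0
      rcases eq_or_ne t 0 with rfl | ht
      · refine ⟨?_, rfl⟩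
        have hsv : s • v = 0 := by simpa using h0
        rcases smul_eq_zero.1 hsv with h | h
        exacts [h, absurd h hv0]
      · exfalso
        apply hcol (-(s/t))
        have h1 : t • w = (-s) • v := by
          calc t • w = (s • v + t • w) - s • v := by module
            _ = 0 - s • v := by rw [h0]
            _ = (-s) • v := by module
        calc w = t⁻¹ • (t • w) := by rw [smul_smul, inv_mul_cancel₀ ht, one_smul]
          _ = t⁻¹ • ((-s) • v) := by rw [h1]
          _ = (-(s/t)) • v := by rw [smul_smul]; ring_nf
    have hz0 : a • v + b • w ≠ 0 := by
      intro h0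
      rcases hind a b h0 with ⟨h1, _⟩
      exact absurd h1 ha'.ne'
    by_cases hspan : ∃ α β : ℝ, u = α • v + β • w
    · obtain ⟨α, β, hαβ⟩ := hspan
      have hu0 : u ≠ 0 := lift_nonzero hu
      by_cases hc1 : 0 < α ∧ a * β ≤ b * α
      · have e : (a/α) • u + (b - a*β/α) • w = a • v + b • w := by
          rw [hαβ]; match_scalars <;> (field_simp [hc1.1.ne']; try ring)
        refine (hw.combo (div_nonneg ha hc1.1.le) ?_ ?_).congr e
        · rw [show b - a*β/α = (b*α - a*β)/α by field_simp [hc1.1.ne']; try ring]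
          exact div_nonneg (by linarith [hc1.2]) hc1.1.le
        · rw [e]; exact hz0
      · by_cases hc2 : 0 < β ∧ b * α ≤ a * β
        · have e : (b/β) • u + (a - b*α/β) • v = a • v + b • w := by
            rw [hαβ]; match_scalars <;> (field_simp [hc2.1.ne']; try ring)
          refine (hv.combo (div_nonneg hb hc2.1.le) ?_ ?_).congr e
          · rw [show a - b*α/β = (a*β - b*α)/β by field_simp [hc2.1.ne']; try ring]
            exact div_nonneg (by linarith [hc2.2]) hc2.1.le
          · rw [e]; exact hz0
        · exfalso
          have hβle : β ≤ 0 := by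
            by_contra h
            push_neg at h
            have h2 : ¬ b*α ≤ a*β := fun hle => hc2 ⟨h, hle⟩
            push_neg at h2
            have hαpos : 0 < α := by nlinarith
            exact (fun hle => hc1 ⟨hαpos, hle⟩) h2.le
          have hαle : α ≤ 0 := by
            by_contra h
            push_neg at h
            have h1 : ¬ a*β ≤ b*α := fun hle => hc1 ⟨h, hle⟩
            push_neg at h1
            have hβpos : 0 < β := by nlinarith
            exact absurd hβpos (not_lt.2 hβle)
          have hα0 : α ≠ 0 := by
            rintro rfl
            have hβ0 : β ≠ 0 := by
              rintro rfl; apply hu0; rw [hαβ]; module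
            have hβlt : β < 0 := hβle.lt_of_ne hβ0
            have hwiu : w = β⁻¹ • u := by
              rw [hαβ, zero_smul, zero_add, smul_smul, inv_mul_cancel₀ hβ0, one_smul]
            have hpos : 0 < β⁻¹ := SegIn.pos_of_smul_self (hw.congr hwiu)
            have : β⁻¹ < 0 := inv_lt_zero.2 hβlt
            linarith
          have hβ0 : β ≠ 0 := by
            rintro rfl
            have hαlt : α < 0 := hαle.lt_of_ne hα0
            have hviu : v = α⁻¹ • u := by
              rw [hαβ, zero_smul, add_zero, smul_smul, inv_mul_cancel₀ hα0, one_smul]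
            have hpos : 0 < α⁻¹ := SegIn.pos_of_smul_self (hv.congr hviu)
            have : α⁻¹ < 0 := inv_lt_zero.2 hαlt
            linarith
          have hαlt : α < 0 := hαle.lt_of_ne hα0
          have hβlt : β < 0 := hβle.lt_of_ne hβ0
          have hvu : ∀ c : ℝ, v ≠ c • u := by
            intro c hcv
            have hc0 : c ≠ 0 := by
              rintro rfl; rw [zero_smul] at hcv; exact hv0 hcv
            apply hcol ((β⁻¹*(1-α*c))/c)
            have hwu : w = (β⁻¹*(1-α*c)) • u := by
              have h1 : β • w = (1-α*c) • u := by
                calc β • w = u - α • v := by rw [hαβ]; module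
                  _ = u - α • (c • u) := by rw [hcv]
                  _ = (1-α*c) • u := by module
              calc w = β⁻¹ • (β • w) := by rw [smul_smul, inv_mul_cancel₀ hβ0, one_smul]
                _ = β⁻¹ • ((1-α*c) • u) := by rw [h1]
                _ = (β⁻¹*(1-α*c)) • u := by rw [smul_smul]
            rw [hwu, hcv, smul_smul, div_mul_cancel₀ _ hc0]
          have hnegv : SegIn C u (-v) := by
            intro s hs
            have hv_eq : v = α⁻¹ • u - (β/α) • w := by
              have h1 : α • v = u - β • w := by rw [hαβ]; module
              calc v = α⁻¹ • (α • v) := by rw [smul_smul, inv_mul_cancel₀ hα0, one_smul]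
                _ = α⁻¹ • (u - β • w) := by rw [h1]
                _ = α⁻¹ • u - (β/α) • w := by
                    rw [smul_sub, smul_smul, div_eq_inv_mul]
            have e : (1-s) • u + s • (-v) = ((1-s) - s/α) • u + (s*β/α) • w := by
              rw [hv_eq]; match_scalars <;> (field_simp [hα0]; try ring)
            rw [e]
            have hinvneg : α⁻¹ < 0 := inv_lt_zero.2 hαlt
            have hc1' : 0 ≤ (1-s) - s/α := by
              have e2 : (1-s) - s/α = (1-s) + s*(-α⁻¹) := by
                rw [div_eq_mul_inv]; ring
              rw [e2]
              have := mul_nonneg hs.1 (show (0:ℝ) ≤ -α⁻¹ by linarith)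
              linarith [hs.2]
            have hβα : 0 < β/α := div_pos_iff.2 (Or.inr ⟨hβlt, hαlt⟩)
            have hc2' : 0 ≤ s*β/α := by
              rw [show s*β/α = s*(β/α) by ring]
              exact mul_nonneg hs.1 hβα.le
            apply cone_point hw hc1' hc2'
            rcases hs.1.lt_or_eq with hspos | hszero
            · have : 0 < s*β/α := by
                rw [show s*β/α = s*(β/α) by ring]
                exact mul_pos hspos hβα
              linarith
            · rw [← hszero]; norm_num
          rcases xor_segIn hconv hu hv.mem_right hvu with ⟨_, h⟩ | ⟨_, h⟩
          · exact h hnegv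
          · exact h hv
    · push_neg at hspan
      rcases xor_projSeg hconv hv.mem_right hw.mem_right hcol with ⟨hvw, _⟩ | ⟨hvnw, _⟩
      · apply segIn_of_path hCo hconv hu (v := v) (w := a • v + b • w) ?_ hv
        intro t ht
        have e : (1-t) • v + t • (a • v + b • w) = (1-t+t*a) • v + (t*b) • w := by module
        have hco1 : 0 < 1-t+t*a := by
          nlinarith [mul_nonneg (sub_nonneg.2 ht.2) (show (0:ℝ) ≤ 1 - a by linarith)]
        have hpt0 : (1-t) • v + t • (a • v + b • w) ≠ 0 := by
          rw [e]; intro h0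
          rcases hind _ _ h0 with ⟨h1, _⟩
          linarith
        constructor
        · refine ⟨hpt0, hvw ⟨1-t+t*a, t*b, ?_, ?_, ?_⟩⟩
          · rw [← e]; exact hpt0
          · exact mul_nonneg hco1.le (mul_nonneg ht.1 hb)
          · rw [Projectivization.mk_eq_mk_iff']
            exact ⟨1, by rw [one_smul, e]⟩
        · intro c hc
          rcases eq_or_ne c 0 with rfl | hc0
          · rw [zero_smul] at hc; exact hpt0 hc
          · apply hspan (c⁻¹*(1-t+t*a)) (c⁻¹*(t*b))
            calc u = c⁻¹ • (c • u) := by rw [smul_smul, inv_mul_cancel₀ hc0, one_smul]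
              _ = c⁻¹ • ((1-t+t*a) • v + (t*b) • w) := by rw [← hc, e]
              _ = (c⁻¹*(1-t+t*a)) • v + (c⁻¹*(t*b)) • w := by module
      · exfalso
        have hwu : ∀ c : ℝ, w ≠ c • u := by
          intro c hcw
          rcases eq_or_ne c 0 with rfl | hc0
          · rw [zero_smul] at hcw; exact hw0 hcw
          · exact hspan 0 c⁻¹
              (by rw [hcw, smul_smul, inv_mul_cancel₀ hc0]; module)
        have hnegw : SegIn C u (-w) := by
          apply segIn_of_path hCo hconv hu (v := v) (w := -w) ?_ hv
          intro t ht
          have hpt0 : (1-t) • v + t • (-w) ≠ 0 := by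
            intro h0
            have h0' : (1-t) • v + (-t) • w = 0 := by rw [← h0]; module
            rcases hind _ _ h0' with ⟨h1, h2⟩
            have : t = 0 := by linarith
            rw [this] at h1; norm_num at h1
          constructor
          · refine ⟨hpt0, hvnw ⟨1-t, t, hpt0, ?_, rfl⟩⟩
            exact mul_nonneg (by linarith [ht.2]) ht.1
          · intro c hc
            rcases eq_or_ne c 0 with rfl | hc0
            · rw [zero_smul] at hc; exact hpt0 hc
            · apply hspan (c⁻¹*(1-t)) (c⁻¹*(-t))
              calc u = c⁻¹ • (c • u) := by rw [smul_smul, inv_mul_cancel₀ hc0, one_smul]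
                _ = c⁻¹ • ((1-t) • v + t • (-w)) := by rw [← hc]
                _ = (c⁻¹*(1-t)) • v + (c⁻¹*(-t)) • w := by module
        rcases xor_segIn hconv hu hw.mem_right hwu with ⟨_, h⟩ | ⟨_, h⟩
        · exact h hnegw
        · exact h hw

end Convexity
end SatMC
namespace SatMC

section Sep
open Set Module
variable {W : Type*} [NormedAddCommGroup W] [NormedSpace ℝ W] [FiniteDimensional ℝ W]

lemma exists_dual_vanishing (h2 : 2 ≤ Module.finrank ℝ W) {v : W} (hv : v ≠ 0) :
    ∃ φ : Module.Dual ℝ W, φ ≠ 0 ∧ φ v = 0 := by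
  have hlt : (ℝ ∙ v) < ⊤ := by
    rw [lt_top_iff_ne_top]
    intro htop
    have h1 : Module.finrank ℝ (ℝ ∙ v) = 1 := finrank_span_singleton hv
    rw [htop, finrank_top] at h1
    omega
  obtain ⟨φ, hφ0, hφ⟩ := Submodule.exists_dual_map_eq_bot_of_lt_top hlt inferInstance
  refine ⟨φ, hφ0, ?_⟩
  have hm : φ v ∈ Submodule.map φ (ℝ ∙ v) :=
    ⟨v, Submodule.mem_span_singleton_self v, rfl⟩
  rw [hφ] at hm
  simpa using hm

lemma exists_ker_nonzero (h2 : 2 ≤ Module.finrank ℝ W) (φ : Module.Dual ℝ W) :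
    ∃ v : W, v ≠ 0 ∧ φ v = 0 := by
  have hk : LinearMap.ker φ ≠ ⊥ := by
    intro hbot
    have h1 := LinearMap.finrank_range_add_finrank_ker φ
    rw [hbot, finrank_bot] at h1
    have h2' : Module.finrank ℝ (LinearMap.range φ) ≤ Module.finrank ℝ ℝ :=
      Submodule.finrank_le _
    rw [Module.finrank_self] at h2'
    omega
  obtain ⟨v, hv, hv0⟩ := Submodule.exists_mem_ne_zero_of_ne_bot hk
  exact ⟨v, hv0, hv⟩

lemma separation {C : Set (ℙ ℝ W)} (h2 : 2 ≤ Module.finrank ℝ W) (hCo : IsOpen C)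
    (hconv : IsProjConvex C) {x : ℙ ℝ W} (hx : x ∉ C) :
    ∃ φ : Module.Dual ℝ W, φ ≠ 0 ∧ φ x.rep = 0 ∧ ∀ y ∈ C, φ y.rep ≠ 0 := by
  rcases C.eq_empty_or_nonempty with rfl | ⟨p₀, hp₀⟩
  · obtain ⟨φ, hφ0, hφv⟩ := exists_dual_vanishing h2 x.rep_nonzero
    exact ⟨φ, hφ0, hφv, by simp⟩
  · set u := p₀.rep with hudef
    have hu : u ∈ lift C := rep_mem_lift hp₀
    have hKconv : Convex ℝ {v : W | SegIn C u v} := convex_segIn hCo hconv hu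
    have hKopen : IsOpen {v : W | SegIn C u v} :=
      isOpen_segIn hCo u (by exact continuous_id : Continuous fun v : W => v)
    have hdisj : Disjoint {v : W | SegIn C u v} (↑(ℝ ∙ x.rep) : Set W) := by
      rw [Set.disjoint_left]
      intro v hvK hvS
      obtain ⟨t, ht⟩ := Submodule.mem_span_singleton.1 hvS
      have hvl : v ∈ lift C := SegIn.mem_right hvK
      obtain ⟨hne, hmem⟩ := hvl
      have ht0 : t ≠ 0 := by rintro rfl; rw [zero_smul] at ht; exact hne ht.symm
      apply hx
      have hxv : Projectivization.mk ℝ v hne = x := by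
        conv_rhs => rw [← Projectivization.mk_rep x]
        rw [Projectivization.mk_eq_mk_iff']
        exact ⟨t, ht⟩
      rwa [hxv] at hmem
    obtain ⟨f, r, hf1, hf2⟩ :=
      geometric_hahn_banach_open hKconv hKopen (ℝ ∙ x.rep).convex hdisj
    have hfx : f x.rep = 0 := by
      by_contra hfx
      have hmem : ((r-1)/f x.rep) • x.rep ∈ (↑(ℝ ∙ x.rep) : Set W) :=
        Submodule.smul_mem _ _ (Submodule.mem_span_singleton_self _)
      have := hf2 _ hmem
      rw [map_smul, smul_eq_mul, div_mul_cancel₀ _ hfx] at this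
      linarith
    have hr0 : r ≤ 0 := by
      have := hf2 0 (Submodule.zero_mem _)
      simpa using this
    have hneg : ∀ v, SegIn C u v → f v < 0 := fun v hv =>
      lt_of_lt_of_le (hf1 v hv) hr0
    have hfu : f u < 0 := hneg u (segIn_self hu)
    refine ⟨(f : W →ₗ[ℝ] ℝ), ?_, hfx, ?_⟩
    · intro h0
      have : f u = 0 := by
        have := congrArg (fun g => g u) h0
        simpa using this
      linarith
    · intro y hy
      show f y.rep ≠ 0
      by_cases hyp : y = p₀
      · subst hyp
        exact (hneg _ (segIn_self hu)).ne
      · have hyl : y.rep ∈ lift C := rep_mem_lift hy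
        have hindy : ∀ c : ℝ, y.rep ≠ c • u := by
          intro c hc
          have hc0 : c ≠ 0 := by
            rintro rfl; rw [zero_smul] at hc; exact y.rep_nonzero hc
          apply hyp
          rw [← Projectivization.mk_rep y, ← Projectivization.mk_rep p₀]
          rw [Projectivization.mk_eq_mk_iff']
          exact ⟨c, hc.symm⟩
        rcases Xor'.or (xor_segIn hconv hu hyl hindy) with h | h
        · exact (hneg _ h).ne
        · have hlt : f (-(y.rep)) < 0 := hneg _ h
          rw [map_neg] at hlt
          have : 0 < f y.rep := by linarith
          exact this.ne'
end Sep

section Hyper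
open Set
variable {W : Type*} [NormedAddCommGroup W] [NormedSpace ℝ W] [FiniteDimensional ℝ W]

lemma isOpen_hyperCompl (φ : Module.Dual ℝ W) :
    IsOpen {x : ℙ ℝ W | φ x.rep ≠ 0} := by
  have hqm : Topology.IsQuotientMap (Projectivization.mk' ℝ (V := W)) := isQuotientMap_quotient_mk'
  rw [← hqm.isOpen_preimage]
  have he : (Projectivization.mk' ℝ (V := W) ⁻¹' {x : ℙ ℝ W | φ x.rep ≠ 0}) =
      {p : {v : W // v ≠ 0} | φ p.val ≠ 0} := by
    ext p
    simp only [Set.mem_preimage, Projectivization.mk'_eq_mk, Set.mem_setOf_eq]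
    obtain ⟨c, hc⟩ := Projectivization.exists_smul_eq_mk_rep ℝ p.val p.2
    rw [← hc, Units.smul_def, map_smul, smul_eq_mul]
    constructor
    · intro h h0
      rw [h0, mul_zero] at h; exact h rfl
    · intro h hc0
      rcases mul_eq_zero.1 hc0 with h' | h'
      · exact absurd h' c.ne_zero
      · exact h h'
  rw [he]
  have hcont : Continuous fun p : {v : W // v ≠ 0} => φ p.val :=
    (LinearMap.continuous_of_finiteDimensional φ).comp continuous_subtype_val
  exact (isOpen_compl_singleton (x := (0:ℝ))).preimage hcont

private lemma coeff_zero_pos {P Q a b : ℝ} (hPQ : 0 < P*Q) (hab : 0 ≤ a*b)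
    (h0 : a*P + b*Q = 0) : a = 0 ∧ b = 0 := by
  have hP : P ≠ 0 := fun h => by rw [h, zero_mul] at hPQ; exact lt_irrefl 0 hPQ
  have hb : b = 0 := by
    by_contra hb0
    have key : a*b*(P*P) + b*b*(P*Q) = (a*P + b*Q) * (b*P) := by ring
    rw [h0, zero_mul] at key
    have h1 : 0 ≤ a*b*(P*P) := mul_nonneg hab (mul_self_nonneg P)
    have h2 : 0 < b*b*(P*Q) := mul_pos (mul_self_pos.2 hb0) hPQ
    linarith
  have ha : a = 0 := by
    rw [hb, zero_mul, add_zero, mul_eq_zero] at h0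
    rcases h0 with h | h
    exacts [h, absurd h hP]
  exact ⟨ha, hb⟩

private lemma coeff_zero_neg {P Q a b : ℝ} (hPQ : P*Q < 0) (hab : a*b ≤ 0)
    (h0 : a*P + b*Q = 0) : a = 0 ∧ b = 0 := by
  have := coeff_zero_pos (P := P) (Q := -Q) (a := a) (b := -b)
    (by nlinarith) (by nlinarith) (by linarith [h0])
  exact ⟨this.1, by linarith [this.2]⟩

lemma isProjConvex_hyperCompl (φ : Module.Dual ℝ W) :
    IsProjConvex {x : ℙ ℝ W | φ x.rep ≠ 0} := by
  intro p hp q hq hpq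
  simp only [mem_setOf_eq] at hp hq
  set u := p.rep with hudef
  set v := q.rep with hvdef
  have hind : ∀ c : ℝ, v ≠ c • u := by
    intro c hc
    apply hpq
    have hc0 : c ≠ 0 := by
      rintro rfl; rw [zero_smul] at hc; exact q.rep_nonzero hc
    rw [← Projectivization.mk_rep p, ← Projectivization.mk_rep q,
      Projectivization.mk_eq_mk_iff']
    refine ⟨c⁻¹, ?_⟩
    show c⁻¹ • v = u
    rw [hc, smul_smul, inv_mul_cancel₀ hc0, one_smul]
  have hrep_ne : ∀ (z : W) (hz : z ≠ 0), φ z ≠ 0 →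
      φ (Projectivization.mk ℝ z hz).rep ≠ 0 := by
    intro z hz hφz
    obtain ⟨c, hc⟩ := Projectivization.exists_smul_eq_mk_rep ℝ z hz
    rw [← hc, Units.smul_def, map_smul, smul_eq_mul]
    exact mul_ne_zero c.ne_zero hφz
  have hrep_zero : ∀ (z : W) (hz : z ≠ 0), φ z = 0 →
      φ (Projectivization.mk ℝ z hz).rep = 0 := by
    intro z hz hφz
    obtain ⟨c, hc⟩ := Projectivization.exists_smul_eq_mk_rep ℝ z hz
    rw [← hc, Units.smul_def, map_smul, smul_eq_mul, hφz, mul_zero]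
  have hφz : φ ((φ v) • u + (-(φ u)) • v) = 0 := by
    rw [map_add, map_smul, map_smul, smul_eq_mul, smul_eq_mul]; ring
  have hwit : (φ v) • u + (-(φ u)) • v ≠ 0 := by
    intro h0
    apply hind (φ v / φ u)
    have h1 : (φ u) • v = (φ v) • u := by
      calc (φ u) • v = (φ v) • u + (-(1:ℝ)) • ((φ v) • u + (-(φ u)) • v) := by module
        _ = (φ v) • u + (-(1:ℝ)) • 0 := by rw [h0]
        _ = (φ v) • u := by module
    calc v = (φ u)⁻¹ • ((φ u) • v) := by rw [smul_smul, inv_mul_cancel₀ hp, one_smul]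
      _ = (φ u)⁻¹ • ((φ v) • u) := by rw [h1]
      _ = (φ v / φ u) • u := by rw [smul_smul, ← div_eq_inv_mul]
  rcases (mul_ne_zero hp hq).lt_or_gt with hPQ | hPQ
  · refine Or.inr ⟨?_, ?_⟩
    · rintro x ⟨a, b, hz, hab, rfl⟩
      show φ (Projectivization.mk ℝ (a • u + b • v) hz).rep ≠ 0
      apply hrep_ne
      intro h0
      rw [map_add, map_smul, map_smul, smul_eq_mul, smul_eq_mul] at h0
      rcases coeff_zero_neg hPQ hab h0 with ⟨ha, hb⟩
      apply hz; rw [ha, hb]; module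
    · intro hsub
      have hmem : Projectivization.mk ℝ ((φ v) • u + (-(φ u)) • v) hwit ∈ projSeg u v :=
        ⟨φ v, -(φ u), hwit, by nlinarith, rfl⟩
      have hin := hsub hmem
      exact hin (hrep_zero _ hwit hφz)
  · refine Or.inl ⟨?_, ?_⟩
    · rintro x ⟨a, b, hz, hab, rfl⟩
      show φ (Projectivization.mk ℝ (a • u + b • v) hz).rep ≠ 0
      apply hrep_ne
      intro h0
      rw [map_add, map_smul, map_smul, smul_eq_mul, smul_eq_mul] at h0
      rcases coeff_zero_pos hPQ hab h0 with ⟨ha, hb⟩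
      apply hz; rw [ha, hb]; module
    · intro hsub
      have hmem : Projectivization.mk ℝ ((φ v) • u + (-(φ u)) • v) hwit ∈ projSegN u v :=
        ⟨φ v, -(φ u), hwit, by nlinarith, rfl⟩
      have hin := hsub hmem
      exact hin (hrep_zero _ hwit hφz)

end Hyper
end SatMC
namespace SatMC

section Duality
open Set Module
variable {W : Type*} [NormedAddCommGroup W] [NormedSpace ℝ W] [FiniteDimensional ℝ W]

lemma phiStar_empty : PhiStar (∅ : Set (ℙ ℝ (Module.Dual ℝ W))) = univ := by
  ext x; simp [PhiStar]

lemma phiMap_empty : PhiMap (∅ : Set (ℙ ℝ W)) = univ := by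
  ext ψ; simp [PhiMap]

lemma subset_phiStar_phiMap (S : Set (ℙ ℝ W)) : S ⊆ PhiStar (PhiMap S) :=
  fun x hx ψ hψ => hψ x hx

lemma exists_distinct_points (h2 : 2 ≤ Module.finrank ℝ W) :
    ∃ p q : ℙ ℝ W, p ≠ q := by
  have hnt : Nontrivial W := by
    apply Module.nontrivial_of_finrank_pos (R := ℝ)
    omega
  obtain ⟨v, hv⟩ := exists_ne (0 : W)
  obtain ⟨φ, hφ0, hφv⟩ := exists_dual_vanishing h2 hv
  have hφw : ∃ w : W, φ w ≠ 0 := by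
    by_contra h
    push_neg at h
    exact hφ0 (LinearMap.ext fun w => by simpa using h w)
  obtain ⟨w, hw⟩ := hφw
  have hw0 : w ≠ 0 := fun h => hw (by rw [h, map_zero])
  refine ⟨Projectivization.mk ℝ v hv, Projectivization.mk ℝ w hw0, ?_⟩
  intro h
  rw [Projectivization.mk_eq_mk_iff'] at h
  obtain ⟨c, hc⟩ := h
  have : φ v = c * φ w := by rw [← hc, map_smul, smul_eq_mul]
  rw [hφv] at this
  have hc0 : c = 0 := by
    rcases mul_eq_zero.1 this.symm with h' | h'
    exacts [h', absurd h' hw]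
  rw [hc0, zero_smul] at hc
  exact hv hc.symm

lemma not_isProjConvex_univ (h2 : 2 ≤ Module.finrank ℝ W) :
    ¬ IsProjConvex (univ : Set (ℙ ℝ W)) := by
  intro hconv
  obtain ⟨p, q, hpq⟩ := exists_distinct_points h2
  rcases hconv p trivial q trivial hpq with ⟨_, h⟩ | ⟨_, h⟩
  · exact h (subset_univ _)
  · exact h (subset_univ _)

lemma satMC_iff (h2 : 2 ≤ Module.finrank ℝ W) (S : Set (ℙ ℝ W)) :
    IsSatMultiConvex S ↔ S ≠ Set.univ ∧ PhiStar (PhiMap S) = S := by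
  constructor
  · rintro ⟨F, ⟨S₀, hS₀⟩, hF, rfl⟩
    have hS₀sub : ⋂₀ F ⊆ S₀ := sInter_subset_of_mem hS₀
    constructor
    · intro huniv
      have hS₀univ : S₀ = univ := eq_univ_of_univ_subset (huniv ▸ hS₀sub)
      exact not_isProjConvex_univ h2 (hS₀univ ▸ (hF S₀ hS₀).2)
    · apply Subset.antisymm
      · intro x hx
        by_contra hxS
        rw [mem_sInter] at hxS
        push_neg at hxS
        obtain ⟨S₁, hS₁F, hxS₁⟩ := hxS
        obtain ⟨φ, hφ0, hφx, hφ⟩ :=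
          separation h2 (hF S₁ hS₁F).1 (hF S₁ hS₁F).2 hxS₁
        have hmem : Projectivization.mk ℝ φ hφ0 ∈ PhiMap (⋂₀ F) := by
          intro y hy
          obtain ⟨c, hc⟩ := Projectivization.exists_smul_eq_mk_rep ℝ φ hφ0
          rw [← hc, Units.smul_def]
          simp only [LinearMap.smul_apply, smul_eq_mul]
          exact mul_ne_zero c.ne_zero (hφ y (hy S₁ hS₁F))
        have hx' := hx _ hmem
        obtain ⟨c, hc⟩ := Projectivization.exists_smul_eq_mk_rep ℝ φ hφ0
        rw [← hc, Units.smul_def] at hx'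
        simp only [LinearMap.smul_apply, smul_eq_mul] at hx'
        rw [hφx, mul_zero] at hx'
        exact hx' rfl
      · exact subset_phiStar_phiMap _
  · rintro ⟨hne, heq⟩
    have hT : (PhiMap S).Nonempty := by
      rcases (PhiMap S).eq_empty_or_nonempty with h | h
      · exfalso; apply hne; rw [← heq, h, phiStar_empty]
      · exact h
    refine ⟨(fun ψ : ℙ ℝ (Module.Dual ℝ W) => {x : ℙ ℝ W | ψ.rep x.rep ≠ 0}) '' PhiMap S,
      hT.image _, ?_, ?_⟩
    · rintro S₁ ⟨ψ, _, rfl⟩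
      exact ⟨isOpen_hyperCompl ψ.rep, isProjConvex_hyperCompl ψ.rep⟩
    · rw [sInter_image]
      ext x
      simp only [mem_iInter, mem_setOf_eq]
      conv_lhs => rw [← heq]
      exact Iff.rfl

lemma phiMap_phiStar_eq (T : Set (ℙ ℝ (Module.Dual ℝ W))) :
    PhiStar (PhiMap T) = PhiMap (PhiStar T) := by
  have heval : ∀ (z : W) (f : Module.Dual ℝ W), (Module.Dual.eval ℝ W z) f = f z :=
    fun _ _ => rfl
  ext ψ
  constructor
  · intro hψ x hx
    have hχ0 : Module.Dual.eval ℝ W x.rep ≠ 0 := by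
      intro h0
      apply x.rep_nonzero
      refine (Module.forall_dual_apply_eq_zero_iff ℝ x.rep).1 (fun φ => ?_)
      rw [← heval x.rep φ, h0]
      rfl
    have hmem : Projectivization.mk ℝ (Module.Dual.eval ℝ W x.rep) hχ0 ∈ PhiMap T := by
      intro ψ' hψ'
      obtain ⟨c, hc⟩ :=
        Projectivization.exists_smul_eq_mk_rep ℝ (Module.Dual.eval ℝ W x.rep) hχ0
      rw [← hc, Units.smul_def]
      simp only [LinearMap.smul_apply, smul_eq_mul]
      rw [heval]
      exact mul_ne_zero c.ne_zero (hx ψ' hψ')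
    have h1 := hψ _ hmem
    obtain ⟨c, hc⟩ :=
      Projectivization.exists_smul_eq_mk_rep ℝ (Module.Dual.eval ℝ W x.rep) hχ0
    rw [← hc, Units.smul_def] at h1
    simp only [LinearMap.smul_apply, smul_eq_mul] at h1
    rw [heval] at h1
    intro h0
    rw [h0, mul_zero] at h1
    exact h1 rfl
  · intro hψ χ hχ
    obtain ⟨z, hz⟩ : ∃ z : W, Module.Dual.eval ℝ W z = χ.rep :=
      ⟨(Module.evalEquiv ℝ W).symm χ.rep, by
        have h := (Module.evalEquiv ℝ W).apply_symm_apply χ.rep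
        rwa [Module.evalEquiv_apply] at h⟩
    have hz0 : z ≠ 0 := by
      intro h0; apply χ.rep_nonzero; rw [← hz, h0, map_zero]
    have hmem : Projectivization.mk ℝ z hz0 ∈ PhiStar T := by
      intro ψ' hψ'
      obtain ⟨c, hc⟩ := Projectivization.exists_smul_eq_mk_rep ℝ z hz0
      rw [← hc, Units.smul_def, map_smul, smul_eq_mul]
      have hval : ψ'.rep z = χ.rep ψ'.rep := by rw [← hz]; rfl
      rw [hval]
      exact mul_ne_zero c.ne_zero (hχ ψ' hψ')
    have h1 := hψ _ hmem
    obtain ⟨c, hc⟩ := Projectivization.exists_smul_eq_mk_rep ℝ z hz0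
    rw [← hc, Units.smul_def, map_smul, smul_eq_mul] at h1
    have hval : ψ.rep z = χ.rep ψ.rep := by rw [← hz]; rfl
    rw [hval] at h1
    intro h0
    rw [h0, mul_zero] at h1
    exact h1 rfl

end Duality
end SatMC


/-- `S` is a saturated multi-convex set iff `S` is proper and `Φ*(Φ(S)) = S`; consequently `Φ`
restricts to an order-reversing bijection between nonempty saturated multi-convex sets of
`ℙ(V)` and those of `ℙ(V*)`, with inverse `Φ*`. -/
theorem satMultiConvex_duality
    {V : Type*} [NormedAddCommGroup V] [NormedSpace ℝ V] [FiniteDimensional ℝ V]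
    (h2 : 2 ≤ Module.finrank ℝ V) :
    (∀ S : Set (ℙ ℝ V), IsSatMultiConvex S ↔ (S ≠ Set.univ ∧ PhiStar (PhiMap S) = S)) ∧
    Set.BijOn (PhiMap (W := V))
      {S : Set (ℙ ℝ V) | S.Nonempty ∧ IsSatMultiConvex S}
      {T : Set (ℙ ℝ (Module.Dual ℝ V)) | T.Nonempty ∧ IsSatMultiConvex T} ∧
    (∀ S : Set (ℙ ℝ V), S.Nonempty → IsSatMultiConvex S → PhiStar (PhiMap S) = S) ∧
    (∀ S S' : Set (ℙ ℝ V), S.Nonempty → IsSatMultiConvex S → S'.Nonempty →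
      IsSatMultiConvex S' → (S ⊆ S' ↔ PhiMap S' ⊆ PhiMap S)) := by

  have h2' : 2 ≤ Module.finrank ℝ (Module.Dual ℝ V) := by
    rw [Subspace.dual_finrank_eq]; exact h2
  have crit := SatMC.satMC_iff (W := V) h2
  have critD' : ∀ T : Set (ℙ ℝ (Module.Dual ℝ V)),
      IsSatMultiConvex T ↔ T ≠ Set.univ ∧ PhiMap (PhiStar T) = T := by
    intro T
    rw [SatMC.satMC_iff (W := Module.Dual ℝ V) h2' T, SatMC.phiMap_phiStar_eq]
  refine ⟨crit, ⟨?_, ?_, ?_⟩, fun S _ hS => ((crit S).1 hS).2, ?_⟩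
  · -- MapsTo
    rintro S ⟨hSne, hS⟩
    obtain ⟨hSproper, hfix⟩ := (crit S).1 hS
    constructor
    · rcases (PhiMap S).eq_empty_or_nonempty with h | h
      · exfalso; apply hSproper; rw [← hfix, h, SatMC.phiStar_empty]
      · exact h
    · apply (critD' _).2
      refine ⟨?_, by rw [hfix]⟩
      obtain ⟨x, hx⟩ := hSne
      obtain ⟨φ, hφ0, hφx⟩ := SatMC.exists_dual_vanishing h2 x.rep_nonzero
      intro huniv
      have hmem : Projectivization.mk ℝ φ hφ0 ∈ PhiMap S := by
        rw [huniv]; exact Set.mem_univ _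
      have hcontra := hmem x hx
      obtain ⟨c, hc⟩ := Projectivization.exists_smul_eq_mk_rep ℝ φ hφ0
      rw [← hc, Units.smul_def] at hcontra
      simp only [LinearMap.smul_apply, smul_eq_mul] at hcontra
      rw [hφx, mul_zero] at hcontra
      exact hcontra rfl
  · -- InjOn
    rintro S ⟨_, hS⟩ S' ⟨_, hS'⟩ heq
    have h1 := ((crit S).1 hS).2
    have h2'' := ((crit S').1 hS').2
    rw [← h1, ← h2'', heq]
  · -- SurjOn
    rintro T ⟨hTne, hT⟩
    obtain ⟨hTproper, hTfix⟩ := (critD' T).1 hT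
    have hSne : (PhiStar T).Nonempty := by
      rcases (PhiStar T).eq_empty_or_nonempty with h | h
      · exfalso; apply hTproper; rw [← hTfix, h, SatMC.phiMap_empty]
      · exact h
    refine ⟨PhiStar T, ⟨hSne, ?_⟩, hTfix⟩
    apply (crit _).2
    refine ⟨?_, by rw [hTfix]⟩
    obtain ⟨ψ, hψ⟩ := hTne
    obtain ⟨v, hv0, hker⟩ := SatMC.exists_ker_nonzero h2 ψ.rep
    intro huniv
    have hmem : Projectivization.mk ℝ v hv0 ∈ PhiStar T := by
      rw [huniv]; exact Set.mem_univ _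
    have hcontra := hmem ψ hψ
    obtain ⟨c, hc⟩ := Projectivization.exists_smul_eq_mk_rep ℝ v hv0
    rw [← hc, Units.smul_def, map_smul, smul_eq_mul, hker, mul_zero] at hcontra
    exact hcontra rfl
  · -- antitone bijection
    intro S S' hSne hS hS'ne hS'
    constructor
    · intro hsub ψ hψ x hx
      exact hψ x (hsub hx)
    · intro hsub
      have h1 := ((crit S).1 hS).2
      have h2'' := ((crit S').1 hS').2
      rw [← h1, ← h2'']
      intro x hx ψ hψ
      exact hx ψ (hsub hψ)
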